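/- arXiv:1204.1746 — 7 statements merged into one kernel-verified Lean document; each statement's English description precedes it below -/
import Mathlib

section
/- A point p is a Z'-removable boundary point of a CNF formula G(Z) if and only if no point p* obtained from p by changing values of (some) variables of Z' satisfies G. -/
universe u
variable {V : Type u}

abbrev Clause (V : Type u) := Set (V × Bool)
abbrev Cnf (V : Type u) := Set (Clause V)

/-- `p` satisfies clause `C`. -/
def SatC (p : V → Bool) (C : Clause V) : Prop := ∃ l ∈ C, p l.1 = l.2

/-- `p` satisfies CNF formula `F`. -/
def SatF (p : V → Bool) (F : Cnf V) : Prop := ∀ C ∈ F, SatC p C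

def VarsC (C : Clause V) : Set V := Prod.fst '' C

def VarsF (F : Cnf V) : Set V := ⋃ C ∈ F, VarsC C

/-- `p` is a `Z'`-boundary point of `F`: `F(p)=0`, every falsified clause contains a
variable of `Z'`, and this fails for every proper subset of `Z'`. -/
def Bnd (F : Cnf V) (Z' : Set V) (p : V → Bool) : Prop :=
  ¬ SatF p F ∧ (∀ C ∈ F, ¬ SatC p C → (VarsC C ∩ Z').Nonempty) ∧
    ∀ Z'' ⊂ Z', ∃ C ∈ F, ¬ SatC p C ∧ VarsC C ∩ Z'' = ∅

/-- `p` is `W`-removable: no point obtained from `p` by changing values of variables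
of `W` satisfies `F`. -/
def Rem (F : Cnf V) (W : Set V) (p : V → Bool) : Prop :=
  ∀ p' : V → Bool, (∀ v ∉ W, p' v = p v) → ¬ SatF p' F

/-- Discard from `F` all clauses containing a variable of `S`. -/
def Dis (F : Cnf V) (S : Set V) : Cnf V := {C ∈ F | VarsC C ∩ S = ∅}

/-- `p` is a `{z}`-boundary point of `F`. -/
def ZBnd (F : Cnf V) (z : V) (p : V → Bool) : Prop :=
  ¬ SatF p F ∧ ∀ C ∈ F, ¬ SatC p C → z ∈ VarsC C

/-- `p` is a `{z}`-removable boundary point: it is a `{z}`-boundary point and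
flipping `z` does not yield a satisfying assignment. -/
def ZRem [DecidableEq V] (F : Cnf V) (z : V) (p : V → Bool) : Prop :=
  ZBnd F z p ∧ ¬ SatF (Function.update p z (!(p z))) F

def SatCq (q : V → Option Bool) (C : Clause V) : Prop := ∃ l ∈ C, q l.1 = some l.2

/-- Cofactor of `F` under partial assignment `q`. -/
def Cof (q : V → Option Bool) (F : Cnf V) : Cnf V :=
  {C' | ∃ C ∈ F, ¬ SatCq q C ∧ C' = {l ∈ C | q l.1 ≠ some (!l.2)}}

def Dom (q : V → Option Bool) : Set V := {v | q v ≠ none}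

/-- Variables of `S` are redundant in `G` (w.r.t. flippable variables `W`):
`G` has no `W`-removable `S'`-boundary point with `S' ⊆ S`. -/
def RedIn (G : Cnf V) (W S : Set V) : Prop :=
  ∀ S' ⊆ S, ∀ p, Bnd G S' p → ¬ Rem G W p

/-- The D-sequent `(F, X', q) → X''` holds. -/
def DSeq (F : Cnf V) (X X' : Set V) (q : V → Option Bool) (X'' : Set V) : Prop :=
  RedIn (Cof q F) (X \ Dom q) X' ∧ RedIn (Dis (Cof q F) X') (X \ Dom q) X''

/-- Redundancy modulo local irredundancy: every `S'`-boundary point of `G`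
(`S' ⊆ S`) that is `W`-removable in `G` is nevertheless `X`-unremovable in `F`. -/
def RedInMod (F : Cnf V) (X : Set V) (G : Cnf V) (W S : Set V) : Prop :=
  ∀ S' ⊆ S, ∀ p, Bnd G S' p → Rem G W p → ¬ Rem F X p

/-- The D-sequent `(F, X', q) → X''` holds modulo local irredundancy. -/
def DSeqMod (F : Cnf V) (X X' : Set V) (q : V → Option Bool) (X'' : Set V) : Prop :=
  RedInMod F X (Cof q F) (X \ Dom q) X' ∧
  RedInMod F X (Dis (Cof q F) X') (X \ Dom q) X''

/-- Partial assignments `q1`, `q2` are resolvable on `x`. -/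
def Resolvable (q1 q2 : V → Option Bool) (x : V) : Prop :=
  (∃ b, q1 x = some b ∧ q2 x = some (!b)) ∧
  ∀ v, v ≠ x → ∀ b1 b2, q1 v = some b1 → q2 v = some b2 → b1 = b2

/-- Resolvent of partial assignments `q1`, `q2` on `x`. -/
def ResPA [DecidableEq V] (q1 q2 : V → Option Bool) (x : V) : V → Option Bool :=
  fun v => if v = x then none else match q1 v with | some b => some b | none => q2 v

/-- A `Z''`-boundary point (`Z'' ⊆ Z'`) `p` is a `Z'`-removable boundary point of `G`
(i.e. there is a clause `C` falsified by `p`, with no variable of `Z'`, implied by the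
conjunction of the `Z'`-clauses of `G`) iff no point obtained from `p` by changing
values of (some) variables of `Z'` satisfies `G`. -/
theorem stmt_0 (G : Cnf V) (Z' : Set V) (p : V → Bool)
    (hb : ∃ Z'' ⊆ Z', Bnd G Z'' p) :
    (∃ C : Clause V, ¬ SatC p C ∧ VarsC C ∩ Z' = ∅ ∧
        ∀ q : V → Bool, (∀ D ∈ G, (VarsC D ∩ Z').Nonempty → SatC q D) → SatC q C) ↔
      Rem G Z' p := by
  obtain ⟨Z'', hsub, hnsat, hbnd, -⟩ := hb
  constructor
  · rintro ⟨C, hCp, hCZ, himp⟩ p' hp' hsat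
    have hC : SatC p' C := himp p' (fun D hD _ => hsat D hD)
    obtain ⟨l, hl, hval⟩ := hC
    have hlZ : l.1 ∉ Z' := fun h =>
      Set.eq_empty_iff_forall_notMem.mp hCZ l.1 ⟨⟨l, hl, rfl⟩, h⟩
    exact hCp ⟨l, hl, by rw [← hp' l.1 hlZ]; exact hval⟩
  · intro hrem
    refine ⟨{l | l.1 ∉ Z' ∧ l.2 = !(p l.1)}, ?_, ?_, ?_⟩
    · rintro ⟨l, ⟨-, hl2⟩, hval⟩
      rw [hl2] at hval; simp at hval
    · ext v
      simp only [Set.mem_inter_iff, VarsC, Set.mem_image, Set.mem_empty_iff_false,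
        iff_false, not_and]
      rintro ⟨l, ⟨hl1, -⟩, rfl⟩
      exact hl1
    · intro q hq
      by_contra hqC
      have hagree : ∀ v ∉ Z', q v = p v := by
        intro v hv
        by_contra hne
        exact hqC ⟨(v, !(p v)), ⟨hv, rfl⟩, by
          cases hqv : q v <;> cases hpv : p v <;> simp_all⟩
      have := hrem q hagree
      -- q falsifies some clause D of G
      rw [SatF] at this; push_neg at this
      obtain ⟨D, hD, hqD⟩ := this
      rcases Set.eq_empty_or_nonempty (VarsC D ∩ Z') with hDe | hDn
      · -- D has no var in Z', so p also falsifies D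
        have hpD : ¬ SatC p D := by
          rintro ⟨l, hl, hval⟩
          have hlZ : l.1 ∉ Z' := fun h =>
            Set.eq_empty_iff_forall_notMem.mp hDe l.1 ⟨⟨l, hl, rfl⟩, h⟩
          exact hqD ⟨l, hl, by rw [hagree l.1 hlZ]; exact hval⟩
        obtain ⟨v, hv1, hv2⟩ := hbnd D hD hpD
        exact Set.eq_empty_iff_forall_notMem.mp hDe v ⟨hv1, hsub hv2⟩
      · exact hqD (hq D hD hDn)
end

section
/- If z is a monotone variable of a CNF formula G(Z) (i.e., all clauses of G containing z contain its literal of only one polarity), then z is redundant in G, i.e., G has no {z}-removable boundary point. -/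
universe u
variable {V : Type u}

/-- If `z` is a monotone variable of `G` (its literals occur with only one polarity),
then `z` is redundant in `G`: `G` has no `{z}`-removable boundary point. -/
theorem stmt_2 [DecidableEq V] (G : Cnf V) (z : V)
    (hmono : ∃ b : Bool, ∀ C ∈ G, (z, !b) ∉ C) :
    ∀ p : V → Bool, ¬ ZRem G z p := by
  obtain ⟨b, hb⟩ := hmono
  rintro p ⟨⟨hns, hbd⟩, hflip⟩
  by_cases hpz : p z = b
  · -- p itself has z = b; any falsified clause contains (z,b), so it's satisfied
    rw [SatF] at hns; push_neg at hns
    obtain ⟨C, hC, hCns⟩ := hns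
    have hz := hbd C hC hCns
    obtain ⟨⟨v, c⟩, hmem, hv⟩ := hz
    simp only at hv; subst hv
    have hc : c = b := by
      cases c <;> cases b <;> simp_all [hb C hC]
    exact hCns ⟨(v, c), hmem, by rw [hpz, hc]⟩
  · -- flipped point has z = b
    have hpz' : p z = !b := by cases hp : p z <;> cases b <;> simp_all
    rw [SatF] at hflip; push_neg at hflip
    obtain ⟨C, hC, hCns⟩ := hflip
    -- C does not contain z at all
    have hzC : z ∉ VarsC C := by
      rintro ⟨⟨v, c⟩, hmem, hv⟩
      simp only at hv; subst hv
      have hc : c = b := by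
        cases c <;> cases b <;> simp_all [hb C hC]
      subst hc
      exact hCns ⟨(v, c), hmem, by simp [Function.update_self, hpz']⟩
    -- C is falsified by p as well
    have hCp : ¬ SatC p C := by
      rintro ⟨⟨v, c⟩, hmem, hv⟩
      apply hCns
      refine ⟨(v, c), hmem, ?_⟩
      have hvz : v ≠ z := fun h => hzC ⟨(v, c), hmem, h⟩
      simpa [Function.update_of_ne hvz] using hv
    exact hzC (hbd C hC hCp)
end

section
/- Let G(Z) be a CNF formula with no {z}-removable boundary points, and let C be a clause implied by G. Then G ∧ C has no {z}-removable boundary point. -/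
universe u
variable {V : Type u}

/-- If `G` has no `{z}`-removable boundary points and clause `C` is implied by `G`,
then `G ∧ C` has no `{z}`-removable boundary point. -/
theorem stmt_5 [DecidableEq V] (G : Cnf V) (z : V) (C : Clause V)
    (h : ∀ p : V → Bool, ¬ ZRem G z p)
    (himp : ∀ p : V → Bool, SatF p G → SatC p C) :
    ∀ p : V → Bool, ¬ ZRem (insert C G) z p := by
  intro p hp
  obtain ⟨⟨hns, hbd⟩, hflip⟩ := hp
  by_cases hg : SatF p G
  · exact hns fun D hD => hD.elim (fun e => e ▸ himp p hg) (hg D)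
  · apply h p
    refine ⟨⟨hg, fun D hD hD' => hbd D (Or.inr hD) hD'⟩, fun hg' => ?_⟩
    exact hflip fun D hD => hD.elim (fun e => e ▸ himp _ hg') (hg' D)
end

section
/- Let G(Z) be a CNF formula with no {z}-removable boundary points, and let C be a clause not containing the variable z. Then G ∧ C has no {z}-removable boundary point. -/
universe u
variable {V : Type u}

/-- If `G` has no `{z}`-removable boundary points and clause `C` does not contain `z`,
then `G ∧ C` has no `{z}`-removable boundary point. -/
theorem stmt_6 [DecidableEq V] (G : Cnf V) (z : V) (C : Clause V)
    (h : ∀ p : V → Bool, ¬ ZRem G z p)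
    (hz : z ∉ VarsC C) :
    ∀ p : V → Bool, ¬ ZRem (insert C G) z p := by
  intro p ⟨⟨hns, hbnd⟩, hflip⟩
  -- C is satisfied by p
  have hCsat : SatC p C := by
    by_contra hC
    exact hz (hbnd C (Set.mem_insert _ _) hC)
  -- p falsifies some clause of insert C G, which must be in G
  apply h p
  refine ⟨⟨?_, ?_⟩, ?_⟩
  · intro hs
    exact hns (fun D hD => hD.elim (fun e => e ▸ hCsat) (hs D))
  · intro D hD hDf
    exact hbnd D (Set.mem_insert_of_mem _ hD) hDf
  · intro hs
    apply hflip
    intro D hD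
    rcases hD with rfl | hD
    · rcases hCsat with ⟨l, hl, hpl⟩
      refine ⟨l, hl, ?_⟩
      rw [Function.update_of_ne, hpl]
      intro e; exact hz ⟨l, hl, e⟩
    · exact hs D hD
end

section
/- Let G(Z) be a CNF formula with no {z}-removable boundary points, and let C be a clause of G that contains the variable z. Then the formula G' = G ∖ {C} has no {z}-removable boundary point. -/
universe u
variable {V : Type u}

/-- If `G` has no `{z}`-removable boundary points and `C` is a `{z}`-clause of `G`,
then `G' = G ∖ {C}` has no `{z}`-removable boundary point. -/
theorem stmt_7 [DecidableEq V] (G : Cnf V) (z : V) (C : Clause V)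
    (h : ∀ p : V → Bool, ¬ ZRem G z p)
    (hC : C ∈ G) (hz : z ∈ VarsC C) :
    ∀ p : V → Bool, ¬ ZRem (G \ {C}) z p := by
  intro p hp
  apply h p
  obtain ⟨⟨hns, hbnd⟩, hflip⟩ := hp
  refine ⟨⟨?_, ?_⟩, ?_⟩
  · intro hs; exact hns fun C' hC' => hs C' hC'.1
  · intro C' hC' hnc
    by_cases hCC : C' = C
    · subst hCC; exact hz
    · exact hbnd C' ⟨hC', hCC⟩ hnc
  · intro hs; exact hflip fun C' hC' => hs C' hC'.1
end

section
/- There exist a CNF formula F(X,Y) and a formula F⁺ obtained from F by adding a resolvent of clauses of F, such that the D-sequent (F⁺, ∅, ∅) → X holds but (F, ∅, ∅) → X does not. Concretely, for X = {x}, Y = {y}, F = (x ∨ y) ∧ (¬x ∨ y) and F⁺ = F ∧ y: the variable x is redundant in F⁺ but not redundant in F. -/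
universe u
variable {V : Type u}

/-- Variable `0` plays the role of `x`, variable `1` the role of `y`. -/
def C1 : Clause (Fin 2) := {((0 : Fin 2), true), ((1 : Fin 2), true)}
def C2 : Clause (Fin 2) := {((0 : Fin 2), false), ((1 : Fin 2), true)}
def Cy : Clause (Fin 2) := {((1 : Fin 2), true)}

def Fex : Cnf (Fin 2) := {C1, C2}
def FexPlus : Cnf (Fin 2) := insert Cy Fex

/-- For `F = (x ∨ y) ∧ (¬x ∨ y)` and `F⁺ = F ∧ y` (adding the resolvent `y`):
`x` is redundant in `F⁺` (no removable `{x}`-boundary point), while the point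
`(x=0, y=0)` is a removable `{x}`-boundary point of `F`, so `x` is not redundant
in `F`. -/
theorem stmt_11 :
    (∀ p : Fin 2 → Bool, ¬ ZRem FexPlus 0 p) ∧
      ZRem Fex 0 (fun _ => false) := by
  constructor
  · rintro p ⟨⟨hunsat, hbnd⟩, -⟩
    -- Cy ∈ FexPlus; if p falsifies Cy, ZBnd fails since 0 ∉ VarsC Cy.
    have hCy : Cy ∈ FexPlus := Or.inl rfl
    by_cases hs : SatC p Cy
    · -- then p 1 = true, so p satisfies every clause
      obtain ⟨l, hl, hpl⟩ := hs
      have hl' : l = ((1 : Fin 2), true) := hl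
      subst hl'
      apply hunsat
      intro C hC
      rcases hC with h | h | h <;> subst h
      · exact ⟨((1 : Fin 2), true), rfl, hpl⟩
      · exact ⟨((1 : Fin 2), true), Or.inr rfl, hpl⟩
      · exact ⟨((1 : Fin 2), true), Or.inr rfl, hpl⟩
    · have h0 : (0 : Fin 2) ∈ VarsC Cy := hbnd Cy hCy hs
      obtain ⟨l, hl, hfst⟩ := h0
      have : l = ((1 : Fin 2), true) := hl
      subst this
      exact absurd hfst (by decide)
  · refine ⟨⟨?_, ?_⟩, ?_⟩
    · intro h
      obtain ⟨l, hl, hpl⟩ := h C1 (Or.inl rfl)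
      rcases hl with h | h <;> subst h <;> simp_all
    · intro C hC hns
      rcases hC with h | h <;> subst h
      · exact ⟨((0 : Fin 2), true), Or.inl rfl, rfl⟩
      · exact absurd ⟨((0 : Fin 2), false), Or.inl rfl, rfl⟩ hns
    · intro h
      obtain ⟨l, hl, hpl⟩ := h C2 (Or.inr rfl)
      rcases hl with h | h <;> subst h <;> simp_all [Function.update]
end

section
/- Chained redundancy yields full redundancy: let X = {x₁,…,x_k}, and suppose that for each i, the variable x_i is redundant in the formula Dis(F, {x₁,…,x_{i-1}}). Then the variables of X are redundant in F(X,Y), and hence Dis(F,X) is logically equivalent to ∃X.F(X,Y). -/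
universe u
variable {V : Type u}

lemma chain_main (F : Cnf V) (k : ℕ) (xs : Fin k → V)
    (h : ∀ i : Fin k, ∀ p : V → Bool,
        Bnd (Dis F (xs '' {j : Fin k | j < i})) {xs i} p →
          ¬ Rem (Dis F (xs '' {j : Fin k | j < i})) (Set.range xs) p) :
    ∀ n, n ≤ k → ∀ p : V → Bool, SatF p (Dis F (xs '' {j : Fin k | j.val < n})) →
      ∃ p' : V → Bool, (∀ v ∉ Set.range xs, p' v = p v) ∧ SatF p' F := by
  intro n
  induction n with
  | zero =>
    intro _ p hp
    refine ⟨p, fun _ _ => rfl, ?_⟩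
    intro C hC
    exact hp C ⟨hC, by simp⟩
  | succ n ih =>
    intro hn p hp
    have hnk : n < k := hn
    set i : Fin k := ⟨n, hnk⟩ with hi
    have hset : (xs '' {j : Fin k | j.val < n+1}) = xs '' {j : Fin k | j < i} ∪ {xs i} := by
      have hsets : ({j : Fin k | j.val < n+1} : Set (Fin k)) = {j : Fin k | j < i} ∪ {i} := by
        ext j
        simp only [Set.mem_setOf_eq, Set.mem_union, Set.mem_singleton_iff, Fin.lt_def,
          Fin.ext_iff, hi]
        omega
      rw [hsets, Set.image_union, Set.image_singleton]
    set G : Cnf V := Dis F (xs '' {j : Fin k | j < i}) with hG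
    have hGset : ({j : Fin k | j < i} : Set (Fin k)) = {j : Fin k | j.val < n} := rfl
    by_cases hsat : SatF p G
    · exact ih (Nat.le_of_succ_le hn) p (by rwa [hG, hGset] at hsat)
    · have hbnd : Bnd G {xs i} p := by
        refine ⟨hsat, ?_, ?_⟩
        · intro C hC hns
          by_contra hemp
          rw [Set.not_nonempty_iff_eq_empty] at hemp
          have : C ∈ Dis F (xs '' {j : Fin k | j.val < n+1}) := by
            refine ⟨hC.1, ?_⟩
            rw [hset, Set.inter_union_distrib_left, hC.2, hemp, Set.union_empty]
          exact hns (hp C this)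
        · intro Z'' hZ''
          rw [Set.ssubset_singleton_iff] at hZ''
          subst hZ''
          rw [SatF] at hsat
          push_neg at hsat
          obtain ⟨C, hC, hns⟩ := hsat
          exact ⟨C, hC, hns, Set.inter_empty _⟩
      have hrem := h i p hbnd
      rw [Rem] at hrem
      push_neg at hrem
      obtain ⟨p', hagree, hsat'⟩ := hrem
      obtain ⟨p'', hagree'', hsat''⟩ :=
        ih (Nat.le_of_succ_le hn) p' (by rwa [hGset] at hsat')
      exact ⟨p'', fun v hv => (hagree'' v hv).trans (hagree v hv), hsat''⟩

lemma range_eq_image_lt (k : ℕ) (xs : Fin k → V) :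
    Set.range xs = xs '' {j : Fin k | j.val < k} := by
  have : ({j : Fin k | j.val < k} : Set (Fin k)) = Set.univ := by
    ext j; simp [j.isLt]
  rw [this, Set.image_univ]

/-- Chained redundancy yields full redundancy: let `X = {x₁,…,x_k}` and suppose for
each `i` the variable `x_i` is redundant in `Dis(F, {x₁,…,x_{i-1}})`. Then the
variables of `X` are redundant in `F`, and `Dis(F,X)` is logically equivalent to
`∃X.F(X,Y)`. -/
theorem stmt_16 (F : Cnf V) (k : ℕ) (xs : Fin k → V) (hinj : Function.Injective xs)
    (h : ∀ i : Fin k, ∀ p : V → Bool,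
        Bnd (Dis F (xs '' {j : Fin k | j < i})) {xs i} p →
          ¬ Rem (Dis F (xs '' {j : Fin k | j < i})) (Set.range xs) p) :
    RedIn F (Set.range xs) (Set.range xs) ∧
      ∀ p : V → Bool,
        (∃ p' : V → Bool, (∀ v ∉ Set.range xs, p' v = p v) ∧ SatF p' F) ↔
          SatF p (Dis F (Set.range xs)) := by
  have main := chain_main F k xs h k le_rfl
  rw [← range_eq_image_lt k xs] at main
  have backward : ∀ p : V → Bool, SatF p (Dis F (Set.range xs)) →
      ∃ p' : V → Bool, (∀ v ∉ Set.range xs, p' v = p v) ∧ SatF p' F := main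
  constructor
  · intro S' hS' p hbnd hrem
    have hp : SatF p (Dis F (Set.range xs)) := by
      intro C hC
      by_contra hns
      obtain ⟨v, hv1, hv2⟩ := hbnd.2.1 C hC.1 hns
      have : v ∈ VarsC C ∩ Set.range xs := ⟨hv1, hS' hv2⟩
      rw [hC.2] at this
      exact this
    obtain ⟨p', hag, hsat⟩ := backward p hp
    exact hrem p' hag hsat
  · intro p
    constructor
    · rintro ⟨p', hag, hsat⟩ C hC
      obtain ⟨l, hl, hpl⟩ := hsat C hC.1
      refine ⟨l, hl, ?_⟩
      rw [← hpl]
      exact (hag l.1 (fun hmem => by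
        have : l.1 ∈ VarsC C ∩ Set.range xs := ⟨⟨l, hl, rfl⟩, hmem⟩
        rw [hC.2] at this
        exact this)).symm
    · exact backward p
end
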